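/- arXiv:2101.00279 — 4 statements merged into one kernel-verified Lean document; each statement's English description precedes it below -/
import Mathlib

section
/- Let h: ℕ → [0, ∞) be a multiplicative function such that (i) h(p) ≤ 2 and h(p^r) ≤ h(p) for all primes p and all r ≥ 2, and (ii) for some constant c > 0, ∑_{p ≤ x} h(p) ≪ x^{1/k} / exp(c √(log x)). Then there exists δ > 0 such that ∑_{n ≤ x} h(n) ≪ x^{1/k} / exp(δ √(log x)). -/
set_option maxHeartbeats 1000000

open Finset Filter Asymptotics

lemma aux_sum_le_prod (f : ℕ → ℝ) (hf0 : ∀ n, 0 ≤ f n) (hf1 : f 1 = 1)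
    (hfm : ∀ m n : ℕ, Nat.Coprime m n → f (m*n) = f m * f n) (N : ℕ) :
    ∑ n ∈ Icc 1 N, f n ≤ ∏ p ∈ (Icc 1 N).filter Nat.Prime, ∑ a ∈ range (N+1), f (p^a) := by
  classical
  set P := (Icc 1 N).filter Nat.Prime with hP
  rw [Finset.prod_sum]
  set F : (∀ a ∈ P, ℕ) → ℝ := fun g => ∏ x ∈ P.attach, f (x.1 ^ g x.1 x.2) with hF
  set e : ℕ → (∀ a ∈ P, ℕ) := fun n => fun p _ => n.factorization p with he
  have hsupp : ∀ n ∈ Icc 1 N, n.factorization.support ⊆ P := by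
    intro n hn p hp
    simp only [Nat.support_factorization, Nat.mem_primeFactors] at hp
    obtain ⟨hp1, hp2, hp3⟩ := hp
    simp only [hP, mem_filter, mem_Icc]
    exact ⟨⟨hp1.one_lt.le, (Nat.le_of_dvd (by omega) hp2).trans (mem_Icc.mp hn).2⟩, hp1⟩
  have hfe : ∀ n ∈ Icc 1 N, f n = F (e n) := by
    intro n hn
    have hn0 : n ≠ 0 := by have := (mem_Icc.mp hn).1; omega
    rw [Nat.multiplicative_factorization f hfm hf1 hn0]
    show _ = ∏ x ∈ P.attach, f (x.1 ^ n.factorization x.1)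
    rw [Finset.prod_attach P (fun p => f (p ^ n.factorization p))]
    rw [Finsupp.prod]
    apply Finset.prod_subset (hsupp n hn)
    intro p _ hp
    rw [Finsupp.notMem_support_iff.mp hp, pow_zero, hf1]
  have hmaps : ∀ n ∈ Icc 1 N, e n ∈ P.pi fun _ => range (N+1) := by
    intro n hn
    rw [Finset.mem_pi]
    intro p hp
    rw [mem_range]
    have hn0 : n ≠ 0 := by have := (mem_Icc.mp hn).1; omega
    have := Nat.factorization_lt p hn0
    have hnN := (mem_Icc.mp hn).2
    simp only [he]
    omega
  have hinj : Set.InjOn e (Icc 1 N) := by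
    intro m hm n hn hmn
    have hm0 : m ≠ 0 := by have := (mem_Icc.mp hm).1; omega
    have hn0 : n ≠ 0 := by have := (mem_Icc.mp hn).1; omega
    refine Nat.factorization_inj hm0 hn0 ?_
    ext p
    by_cases hp : p ∈ P
    · exact congrFun (congrFun hmn p) hp
    · rw [Finsupp.notMem_support_iff.mp (fun hc => hp (hsupp m hm hc)),
        Finsupp.notMem_support_iff.mp (fun hc => hp (hsupp n hn hc))]
  calc ∑ n ∈ Icc 1 N, f n = ∑ n ∈ Icc 1 N, F (e n) := Finset.sum_congr rfl hfe
    _ = ∑ g ∈ (Icc 1 N).image e, F g := (Finset.sum_image (fun m hm n hn => hinj hm hn)).symm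
    _ ≤ ∑ g ∈ P.pi fun _ => range (N+1), F g := by
        apply Finset.sum_le_sum_of_subset_of_nonneg
        · intro g hg
          obtain ⟨n, hn, rfl⟩ := Finset.mem_image.mp hg
          exact hmaps n hn
        · intro g _ _
          exact Finset.prod_nonneg fun x _ => hf0 _

lemma aux_basel : ∀ J : ℕ, ∑ j ∈ range J, (1:ℝ)/((j:ℝ)+1)^2 ≤ 2 - 2/((J:ℝ)+1) := by
  intro J
  induction J with
  | zero => norm_num
  | succ J ih =>
    rw [Finset.sum_range_succ]
    have h1 : (0:ℝ) < (J:ℝ) + 1 := by positivity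
    have h2 : (0:ℝ) < (J:ℝ) + 2 := by positivity
    have key : (1:ℝ)/((J:ℝ)+1)^2 + 2/((J:ℝ)+2) ≤ 2/((J:ℝ)+1) := by
      rw [div_add_div _ _ (by positivity) (by positivity),
        div_le_div_iff₀ (by positivity) (by positivity)]
      nlinarith [sq_nonneg ((J:ℝ)+1)]
    push_cast
    have heq : ((J:ℝ)+1+1) = (J:ℝ)+2 := by ring
    rw [heq]
    linarith

lemma aux_exp_pow (t : ℝ) (ht : 0 < t) : Real.exp (-t) ≤ 256 / t^4 := by
  have h1 : t/4 + 1 ≤ Real.exp (t/4) := Real.add_one_le_exp _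
  have h2 : (t/4)^4 ≤ Real.exp t := by
    calc (t/4)^4 ≤ (Real.exp (t/4))^4 := by
          apply pow_le_pow_left₀ (by positivity) (by linarith)
      _ = Real.exp t := by rw [← Real.exp_nat_mul]; push_cast; ring_nf
  rw [Real.exp_neg, inv_eq_one_div, div_le_div_iff₀ (Real.exp_pos t) (by positivity)]
  nlinarith [Real.exp_pos t]

lemma aux_sum_exp_sqrt (a : ℝ) (ha : 0 < a) (J : ℕ) :
    ∑ j ∈ range J, Real.exp (-(a * Real.sqrt j)) ≤ 1 + 2048/a^4 := by
  have hterm : ∀ j : ℕ, 1 ≤ j → Real.exp (-(a * Real.sqrt j)) ≤ 1024/(a^4 * ((j:ℝ)+1)^2) := by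
    intro j hj
    have hj1 : (1:ℝ) ≤ j := by exact_mod_cast hj
    have hsj : 0 < Real.sqrt j := Real.sqrt_pos.mpr (by linarith)
    have := aux_exp_pow (a * Real.sqrt j) (by positivity)
    refine this.trans ?_
    have hsq : (Real.sqrt j)^2 = j := Real.sq_sqrt (by linarith)
    have h4 : (a * Real.sqrt j)^4 = a^4 * (j:ℝ)^2 := by
      rw [mul_pow, show (Real.sqrt j)^4 = ((Real.sqrt j)^2)^2 by ring, hsq]
    rw [h4, div_le_div_iff₀ (by positivity) (by positivity)]
    nlinarith [pow_pos (by positivity : (0:ℝ) < a) 4,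
      mul_nonneg (by linarith : (0:ℝ) ≤ 3*(j:ℝ)+1) (by linarith : (0:ℝ) ≤ (j:ℝ)-1),
      mul_nonneg (le_of_lt (pow_pos (by positivity : (0:ℝ) < a) 4)) (mul_nonneg (by linarith : (0:ℝ) ≤ 3*(j:ℝ)+1) (by linarith : (0:ℝ) ≤ (j:ℝ)-1))]
  calc ∑ j ∈ range J, Real.exp (-(a * Real.sqrt j))
      ≤ ∑ j ∈ range J, ((if j = 0 then (1:ℝ) else 0) + 1024/(a^4 * ((j:ℝ)+1)^2)) := by
        apply Finset.sum_le_sum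
        intro j _
        by_cases hj : j = 0
        · simp [hj, Real.sqrt_zero]
          positivity
        · simp only [hj, if_false, zero_add]
          exact hterm j (by omega)
    _ = (∑ j ∈ range J, (if j = 0 then (1:ℝ) else 0))
          + ∑ j ∈ range J, 1024/(a^4 * ((j:ℝ)+1)^2) := Finset.sum_add_distrib
    _ ≤ 1 + 2048/a^4 := by
        gcongr
        · rw [Finset.sum_ite_eq' (range J) 0 (fun _ => (1:ℝ))]
          split <;> norm_num
        · have hrw : ∀ j : ℕ, 1024/(a^4 * ((j:ℝ)+1)^2) = (1024/a^4) * (1/((j:ℝ)+1)^2) := by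
            intro j; field_simp
          simp_rw [hrw]
          rw [← Finset.mul_sum]
          have hb := aux_basel J
          have h2 : ∑ j ∈ range J, (1:ℝ)/((j:ℝ)+1)^2 ≤ 2 := by
            have h3 : (0:ℝ) < (J:ℝ)+1 := by positivity
            have h4 : 2/((J:ℝ)+1) ≥ 0 := by positivity
            linarith
          calc (1024/a^4) * ∑ j ∈ range J, (1:ℝ)/((j:ℝ)+1)^2 ≤ (1024/a^4) * 2 :=
                mul_le_mul_of_nonneg_left h2 (by positivity)
            _ = 2048/a^4 := by ring

lemma aux_rpow_neg_le (a b σ : ℝ) (ha : 0 < a) (hab : a ≤ b) (hσ : 0 ≤ σ) :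
    b ^ (-σ) ≤ a ^ (-σ) := by
  have hb : 0 < b := lt_of_lt_of_le ha hab
  rw [Real.rpow_neg ha.le, Real.rpow_neg hb.le]
  exact inv_anti₀ (Real.rpow_pos_of_pos ha σ) (Real.rpow_le_rpow ha.le hab hσ)

theorem stmt1 (k : ℕ) (hk : 2 ≤ k) (h : ℕ → ℝ)
    (hnonneg : ∀ n, 0 ≤ h n) (h1 : h 1 = 1)
    (hmult : ∀ m n : ℕ, Nat.Coprime m n → h (m * n) = h m * h n)
    (hi : ∀ p : ℕ, p.Prime → h p ≤ 2 ∧ ∀ r : ℕ, 2 ≤ r → h (p ^ r) ≤ h p)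
    (hii : ∃ c > (0:ℝ),
      (fun x : ℝ => ∑ p ∈ (Icc 1 ⌊x⌋₊).filter Nat.Prime, h p) =O[atTop]
        (fun x : ℝ => x ^ ((1:ℝ)/k) / Real.exp (c * Real.sqrt (Real.log x)))) :
    ∃ δ > (0:ℝ),
      (fun x : ℝ => ∑ n ∈ Icc 1 ⌊x⌋₊, h n) =O[atTop]
        (fun x : ℝ => x ^ ((1:ℝ)/k) / Real.exp (δ * Real.sqrt (Real.log x))) := by
  classical
  obtain ⟨c, hc, hO⟩ := hii
  rw [Asymptotics.isBigO_iff] at hO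
  obtain ⟨C₀, hC₀⟩ := hO
  obtain ⟨X₀, hX₀⟩ := eventually_atTop.mp hC₀
  set C : ℝ := max C₀ 0 with hCdef
  have hC0 : 0 ≤ C := le_max_right _ _
  set X₁ : ℝ := max X₀ 1 with hX₁def
  have hX₁1 : (1:ℝ) ≤ X₁ := le_max_right _ _
  have hk0 : (0:ℝ) < (k:ℝ) := by positivity
  have hkR : (2:ℝ) ≤ (k:ℝ) := by exact_mod_cast hk
  have hSbound : ∀ y : ℝ, X₁ ≤ y →
      ∑ p ∈ (Icc 1 ⌊y⌋₊).filter Nat.Prime, h p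
        ≤ C * (y ^ ((1:ℝ)/k) / Real.exp (c * Real.sqrt (Real.log y))) := by
    intro y hy
    have h1y : (1:ℝ) ≤ y := le_trans hX₁1 hy
    have hgpos : 0 < y ^ ((1:ℝ)/k) / Real.exp (c * Real.sqrt (Real.log y)) := by positivity
    have hb := hX₀ y (le_trans (le_max_left _ _) hy)
    rw [Real.norm_eq_abs, Real.norm_eq_abs, abs_of_pos hgpos] at hb
    calc ∑ p ∈ (Icc 1 ⌊y⌋₊).filter Nat.Prime, h p
        ≤ |∑ p ∈ (Icc 1 ⌊y⌋₊).filter Nat.Prime, h p| := le_abs_self _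
      _ ≤ C₀ * (y ^ ((1:ℝ)/k) / Real.exp (c * Real.sqrt (Real.log y))) := hb
      _ ≤ C * (y ^ ((1:ℝ)/k) / Real.exp (c * Real.sqrt (Real.log y))) :=
          mul_le_mul_of_nonneg_right (le_max_left _ _) hgpos.le
  set c₂ : ℝ := (c/2) * Real.sqrt (Real.log 2) with hc₂def
  have hlog2 : 0 < Real.log 2 := Real.log_pos one_lt_two
  have hc₂ : 0 < c₂ := by positivity
  have h2k : (0:ℝ) < 1/(2*(k:ℝ)) := by positivity
  have hrk : (2:ℝ) ^ (-(1/(2*(k:ℝ)))) < 1 :=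
    Real.rpow_lt_one_of_one_lt_of_neg one_lt_two (by linarith)
  have hrknn : (0:ℝ) ≤ (2:ℝ) ^ (-(1/(2*(k:ℝ)))) := Real.rpow_nonneg (by norm_num) _
  set K : ℝ := (1 - (2:ℝ) ^ (-(1/(2*(k:ℝ)))))⁻¹ with hKdef
  have hKpos : 0 < K := by rw [hKdef]; exact inv_pos.mpr (by linarith)
  set P₀ : ℕ := ⌈X₁⌉₊ with hP₀def
  set B : ℝ := 2*(P₀:ℝ) + 3*C*(1 + 2048/c₂^4) with hBdef
  set E : ℝ := Real.exp (K * B) with hEdef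
  refine ⟨c/2, by positivity, ?_⟩
  rw [Asymptotics.isBigO_iff]
  refine ⟨E, ?_⟩
  filter_upwards [eventually_ge_atTop (max (Real.exp (((k:ℝ)*c)^2 + 1)) 2)] with x hx
  have hx2 : (2:ℝ) ≤ x := le_trans (le_max_right _ _) hx
  have hx0 : (0:ℝ) < x := by linarith
  set L : ℝ := Real.log x with hLdef
  have hL1 : ((k:ℝ)*c)^2 + 1 ≤ L := by
    rw [hLdef]
    calc ((k:ℝ)*c)^2 + 1 = Real.log (Real.exp (((k:ℝ)*c)^2+1)) := (Real.log_exp _).symm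
      _ ≤ Real.log x := Real.log_le_log (Real.exp_pos _) (le_trans (le_max_left _ _) hx)
  have hL0 : 0 < L := by linarith [sq_nonneg ((k:ℝ)*c)]
  set sL : ℝ := Real.sqrt L with hsLdef
  have hsL0 : 0 < sL := Real.sqrt_pos.mpr hL0
  have hsLsq : sL * sL = L := Real.mul_self_sqrt hL0.le
  have hsLkc : (k:ℝ)*c ≤ sL := by
    rw [hsLdef]
    exact (Real.le_sqrt (by positivity) hL0.le).mpr (by linarith)
  set η : ℝ := c/(2*sL) with hηdef
  have hη0 : 0 < η := by positivity
  have hηk : η ≤ 1/(2*(k:ℝ)) := by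
    rw [hηdef, div_le_div_iff₀ (by positivity) (by positivity)]
    calc c * (2*(k:ℝ)) = 2*((k:ℝ)*c) := by ring
      _ ≤ 2*sL := by linarith
      _ = 1*(2*sL) := by ring
  set σ : ℝ := 1/(k:ℝ) - η with hσdef
  have hσlb : 1/(2*(k:ℝ)) ≤ σ := by
    have hsplit : 1/(k:ℝ) - 1/(2*(k:ℝ)) = 1/(2*(k:ℝ)) := by field_simp; ring
    rw [hσdef]; linarith
  have hσ0 : 0 < σ := lt_of_lt_of_le h2k hσlb
  set N : ℕ := ⌊x⌋₊ with hNdef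
  have hN1 : 1 ≤ N := Nat.le_floor (by exact_mod_cast (by linarith : (1:ℝ) ≤ x))
  have hNx : (N:ℝ) ≤ x := Nat.floor_le hx0.le
  set P : Finset ℕ := (Icc 1 N).filter Nat.Prime with hPdef
  set f : ℕ → ℝ := fun n => h n * (n:ℝ) ^ (-σ) with hfdef
  have hf0 : ∀ n, 0 ≤ f n := fun n => mul_nonneg (hnonneg n) (Real.rpow_nonneg (Nat.cast_nonneg n) _)
  have hf1 : f 1 = 1 := by simp [hfdef, h1]
  have hfm : ∀ m n : ℕ, Nat.Coprime m n → f (m*n) = f m * f n := by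
    intro m n hmn
    simp only [hfdef]
    rw [hmult m n hmn, Nat.cast_mul, Real.mul_rpow (Nat.cast_nonneg m) (Nat.cast_nonneg n)]
    ring
  have stepA : ∑ n ∈ Icc 1 N, f n ≤ ∏ p ∈ P, ∑ a ∈ range (N+1), f (p^a) :=
    aux_sum_le_prod f hf0 hf1 hfm N
  have step0 : ∑ n ∈ Icc 1 N, h n ≤ x ^ σ * ∑ n ∈ Icc 1 N, f n := by
    rw [Finset.mul_sum]
    apply Finset.sum_le_sum
    intro n hn
    obtain ⟨hn1, hnN⟩ := Finset.mem_Icc.mp hn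
    have hn0 : (0:ℝ) < (n:ℝ) := by exact_mod_cast hn1
    have hnx : (n:ℝ) ≤ x := le_trans (by exact_mod_cast hnN) hNx
    simp only [hfdef]
    rw [Real.rpow_neg (Nat.cast_nonneg n)]
    have hle : (n:ℝ)^σ ≤ x^σ := Real.rpow_le_rpow hn0.le hnx hσ0.le
    have hnp : 0 < (n:ℝ)^σ := Real.rpow_pos_of_pos hn0 σ
    rw [show x ^ σ * (h n * ((n:ℝ)^σ)⁻¹) = h n * (x^σ / (n:ℝ)^σ) by ring]
    have h1le : (1:ℝ) ≤ x^σ / (n:ℝ)^σ := by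
      rw [le_div_iff₀ hnp, one_mul]; exact hle
    calc h n = h n * 1 := (mul_one _).symm
      _ ≤ h n * (x^σ / (n:ℝ)^σ) := mul_le_mul_of_nonneg_left h1le (hnonneg n)
  have stepB : ∀ p ∈ P, ∑ a ∈ range (N+1), f (p^a) ≤ 1 + K * (h p * (p:ℝ)^(-σ)) := by
    intro p hp
    obtain ⟨hpI, hpp⟩ := Finset.mem_filter.mp hp
    have hp2 : 2 ≤ p := hpp.two_le
    have hp2R : (2:ℝ) ≤ (p:ℝ) := by exact_mod_cast hp2
    set r : ℝ := (p:ℝ)^(-σ) with hrdef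
    have hr0 : 0 ≤ r := Real.rpow_nonneg (by positivity) _
    have hr2 : r ≤ (2:ℝ)^(-σ) := aux_rpow_neg_le 2 (p:ℝ) σ (by norm_num) hp2R hσ0.le
    have hrρ : r ≤ (2:ℝ)^(-(1/(2*(k:ℝ)))) := by
      refine hr2.trans (Real.rpow_le_rpow_of_exponent_le (by norm_num) (by linarith))
    have hr1 : r < 1 := lt_of_le_of_lt hrρ hrk
    have hKr : (1-r)⁻¹ ≤ K := by
      rw [hKdef]
      exact inv_anti₀ (by linarith) (by linarith)
    have hsum : ∑ a ∈ range (N+1), f (p^a) = (∑ a ∈ range N, f (p^(a+1))) + 1 := by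
      rw [Finset.sum_range_succ' (fun a => f (p^a)) N, pow_zero, hf1]
    have hterm : ∀ a ∈ range N, f (p^(a+1)) ≤ h p * r^(a+1) := by
      intro a _
      simp only [hfdef]
      have hcast : ((p^(a+1) : ℕ):ℝ)^(-σ) = r^(a+1) := by
        rw [Nat.cast_pow, ← Real.rpow_natCast (p:ℝ) (a+1), hrdef,
          ← Real.rpow_natCast ((p:ℝ)^(-σ)) (a+1),
          ← Real.rpow_mul (Nat.cast_nonneg p), ← Real.rpow_mul (Nat.cast_nonneg p), mul_comm]
      rw [hcast]
      have hh : h (p^(a+1)) ≤ h p := by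
        rcases Nat.eq_zero_or_pos a with ha | ha
        · subst ha; rw [pow_one]
        · exact (hi p hpp).2 (a+1) (by omega)
      have hrpow : (0:ℝ) ≤ r^(a+1) := pow_nonneg hr0 _
      exact mul_le_mul_of_nonneg_right hh hrpow
    have hgeom : ∑ a ∈ range N, r^(a+1) ≤ K * r := by
      have hsg : ∑ a ∈ range N, r^(a+1) = (∑ a ∈ range N, r^a) * r := by
        rw [Finset.sum_mul]
        exact Finset.sum_congr rfl fun a _ => (pow_succ r a)
      rw [hsg]
      have hle1 : (∑ a ∈ range N, r^a) ≤ (1-r)⁻¹ := by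
        rw [← tsum_geometric_of_lt_one hr0 hr1]
        exact Summable.sum_le_tsum (range N) (fun a _ => pow_nonneg hr0 a)
          (summable_geometric_of_lt_one hr0 hr1)
      exact mul_le_mul_of_nonneg_right (hle1.trans hKr) hr0
    calc ∑ a ∈ range (N+1), f (p^a) = (∑ a ∈ range N, f (p^(a+1))) + 1 := hsum
      _ ≤ (∑ a ∈ range N, h p * r^(a+1)) + 1 :=
          add_le_add_left (Finset.sum_le_sum hterm) 1
      _ = h p * (∑ a ∈ range N, r^(a+1)) + 1 := by rw [Finset.mul_sum]
      _ ≤ h p * (K * r) + 1 :=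
          add_le_add_left (mul_le_mul_of_nonneg_left hgeom (hnonneg p)) 1
      _ = 1 + K * (h p * r) := by ring
  set T : ℝ := ∑ p ∈ P, h p * (p:ℝ)^(-σ) with hTdef
  have stepC : ∏ p ∈ P, ∑ a ∈ range (N+1), f (p^a) ≤ Real.exp (K * T) := by
    calc ∏ p ∈ P, ∑ a ∈ range (N+1), f (p^a)
        ≤ ∏ p ∈ P, Real.exp (K * (h p * (p:ℝ)^(-σ))) := by
          apply Finset.prod_le_prod
          · intro p _; exact Finset.sum_nonneg fun a _ => hf0 _
          · intro p hp
            refine (stepB p hp).trans ?_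
            have := Real.add_one_le_exp (K * (h p * (p:ℝ)^(-σ)))
            linarith
      _ = Real.exp (∑ p ∈ P, K * (h p * (p:ℝ)^(-σ))) := (Real.exp_sum _ _).symm
      _ = Real.exp (K * T) := by rw [hTdef, Finset.mul_sum]
  have stepD : T ≤ B := by
    rw [hTdef, ← Finset.sum_filter_add_sum_filter_not P (fun p => p ≤ P₀)]
    have head : ∑ p ∈ P.filter (fun p => p ≤ P₀), h p * (p:ℝ)^(-σ) ≤ 2*(P₀:ℝ) := by
      calc ∑ p ∈ P.filter (fun p => p ≤ P₀), h p * (p:ℝ)^(-σ)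
          ≤ ∑ _p ∈ P.filter (fun p => p ≤ P₀), (2:ℝ) := by
            apply Finset.sum_le_sum
            intro p hp
            obtain ⟨hpP, hple⟩ := Finset.mem_filter.mp hp
            obtain ⟨hpI, hpp⟩ := Finset.mem_filter.mp hpP
            have h1p : (1:ℝ) ≤ (p:ℝ) := by exact_mod_cast (Finset.mem_Icc.mp hpI).1
            have hrle := Real.rpow_le_one_of_one_le_of_nonpos h1p (by linarith : -σ ≤ 0)
            have hrn : (0:ℝ) ≤ (p:ℝ)^(-σ) := Real.rpow_nonneg (by linarith) _
            nlinarith [hnonneg p, (hi p hpp).1]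
        _ = 2 * ((P.filter (fun p => p ≤ P₀)).card : ℝ) := by
            rw [Finset.sum_const, nsmul_eq_mul]; ring
        _ ≤ 2*(P₀:ℝ) := by
            have hsub : P.filter (fun p => p ≤ P₀) ⊆ Icc 1 P₀ := by
              intro q hq
              obtain ⟨hqP, hqle⟩ := Finset.mem_filter.mp hq
              obtain ⟨hqI, _⟩ := Finset.mem_filter.mp hqP
              exact Finset.mem_Icc.mpr ⟨(Finset.mem_Icc.mp hqI).1, hqle⟩
            have hcard := Finset.card_le_card hsub
            have hic : (Icc 1 P₀).card = P₀ := by rw [Nat.card_Icc]; omega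
            have hfin : ((P.filter (fun p => p ≤ P₀)).card : ℝ) ≤ (P₀:ℝ) := by
              calc ((P.filter (fun p => p ≤ P₀)).card : ℝ) ≤ ((Icc 1 P₀).card : ℝ) := by
                    exact_mod_cast hcard
                _ = (P₀:ℝ) := by rw [hic]
            linarith
    have tail : ∑ p ∈ P.filter (fun p => ¬ p ≤ P₀), h p * (p:ℝ)^(-σ)
        ≤ 3*C*(1 + 2048/c₂^4) := by
      set s := P.filter (fun p => ¬ p ≤ P₀) with hsdef
      have hmapsto : ∀ p ∈ s, Nat.log 2 p ∈ range (N+1) := by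
        intro p hp
        have hpP := (Finset.mem_filter.mp hp).1
        have hpN : p ≤ N := (Finset.mem_Icc.mp (Finset.mem_filter.mp hpP).1).2
        rw [mem_range]
        exact lt_of_le_of_lt (le_trans (Nat.log_le_self 2 p) hpN) (Nat.lt_succ_self N)
      rw [← Finset.sum_fiberwise_of_maps_to hmapsto (fun p => h p * (p:ℝ)^(-σ))]
      have fib : ∀ j ∈ range (N+1),
          ∑ p ∈ s.filter (fun p => Nat.log 2 p = j), h p * (p:ℝ)^(-σ)
            ≤ (3*C) * Real.exp (-(c₂ * Real.sqrt j)) := by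
        intro j _
        set t := s.filter (fun p => Nat.log 2 p = j) with htdef
        rcases Finset.eq_empty_or_nonempty t with hte | hne
        · rw [hte, Finset.sum_empty]; positivity
        · obtain ⟨p₀, hp₀⟩ := hne
          have hp₀s : p₀ ∈ s := (Finset.mem_filter.mp hp₀).1
          have hlog : Nat.log 2 p₀ = j := (Finset.mem_filter.mp hp₀).2
          have hp₀P : p₀ ∈ P := (Finset.mem_filter.mp hp₀s).1
          have hp₀gt : P₀ < p₀ := by
            have := (Finset.mem_filter.mp hp₀s).2; omega
          have hp₀p : p₀.Prime := (Finset.mem_filter.mp hp₀P).2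
          have hp₀N : p₀ ≤ N := (Finset.mem_Icc.mp (Finset.mem_filter.mp hp₀P).1).2
          have hp₀0 : p₀ ≠ 0 := hp₀p.pos.ne'
          have h2j : 2^j ≤ p₀ := by rw [← hlog]; exact Nat.pow_log_le_self 2 hp₀0
          have h2j1 : p₀ < 2^(j+1) := by
            rw [← hlog]; exact Nat.lt_pow_succ_log_self one_lt_two p₀
          set y : ℝ := ((2^(j+1) : ℕ) : ℝ) with hydef
          have hy0 : (0:ℝ) < y := by rw [hydef]; positivity
          have hX₁y : X₁ ≤ y := by
            have hXP : X₁ ≤ (P₀:ℝ) := Nat.le_ceil X₁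
            have hP₀p : (P₀:ℝ) < (p₀:ℝ) := by exact_mod_cast hp₀gt
            have hpy : (p₀:ℝ) < y := by rw [hydef]; exact_mod_cast h2j1
            linarith
          have hSy := hSbound y hX₁y
          have hfy : ⌊y⌋₊ = 2^(j+1) := by rw [hydef, Nat.floor_natCast]
          have hsubfib : t ⊆ (Icc 1 ⌊y⌋₊).filter Nat.Prime := by
            intro q hq
            obtain ⟨hqs, hqlog⟩ := Finset.mem_filter.mp hq
            have hqP := (Finset.mem_filter.mp hqs).1
            obtain ⟨hqI, hqp⟩ := Finset.mem_filter.mp hqP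
            have hq1 : 1 ≤ q := (Finset.mem_Icc.mp hqI).1
            have hq2 : q < 2^(j+1) := by
              rw [← hqlog]; exact Nat.lt_pow_succ_log_self one_lt_two q
            rw [Finset.mem_filter, Finset.mem_Icc, hfy]
            exact ⟨⟨hq1, by omega⟩, hqp⟩
          have hsum1 : ∑ p ∈ t, h p
              ≤ C * (y ^ ((1:ℝ)/k) / Real.exp (c * Real.sqrt (Real.log y))) :=
            le_trans (Finset.sum_le_sum_of_subset_of_nonneg hsubfib
              (fun q _ _ => hnonneg q)) hSy
          set w : ℝ := ((2^j : ℕ):ℝ)^(-σ) with hwdef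
          have h2jpos : (0:ℝ) < ((2^j : ℕ):ℝ) := by positivity
          have hw0 : 0 ≤ w := Real.rpow_nonneg h2jpos.le _
          have hfib_le : ∑ p ∈ t, h p * (p:ℝ)^(-σ) ≤ w * ∑ p ∈ t, h p := by
            rw [Finset.mul_sum]
            apply Finset.sum_le_sum
            intro q hq
            obtain ⟨hqs, hqlog⟩ := Finset.mem_filter.mp hq
            have hq2j : 2^j ≤ q := by rw [← hqlog]; exact Nat.pow_log_le_self 2 (by
              have hqP := (Finset.mem_filter.mp hqs).1
              have := (Finset.mem_Icc.mp (Finset.mem_filter.mp hqP).1).1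
              omega)
            have hq2jR : ((2^j : ℕ):ℝ) ≤ (q:ℝ) := by exact_mod_cast hq2j
            have := aux_rpow_neg_le ((2^j : ℕ):ℝ) (q:ℝ) σ h2jpos hq2jR hσ0.le
            calc h q * (q:ℝ)^(-σ) ≤ h q * w := mul_le_mul_of_nonneg_left this (hnonneg q)
              _ = w * h q := mul_comm _ _
          -- now exponential-form estimates
          set tj : ℝ := (j:ℝ) * Real.log 2 with htjdef
          have htj0 : 0 ≤ tj := by positivity
          have hlogy : Real.log y = tj + Real.log 2 := by
            rw [hydef]; push_cast
            rw [Real.log_pow]; push_cast; ring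
          have hwexp : w = Real.exp (-(σ * tj)) := by
            rw [hwdef, Real.rpow_def_of_pos h2jpos]
            congr 1
            push_cast
            rw [Real.log_pow]
            push_cast [htjdef]; ring
          have hyk : y ^ ((1:ℝ)/k) = Real.exp ((tj + Real.log 2) * (1/(k:ℝ))) := by
            rw [Real.rpow_def_of_pos hy0, hlogy]
          have htjL : tj ≤ L := by
            have h2jx : ((2^j : ℕ):ℝ) ≤ x := by
              calc ((2^j : ℕ):ℝ) ≤ (p₀:ℝ) := by exact_mod_cast h2j
                _ ≤ (N:ℝ) := by exact_mod_cast hp₀N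
                _ ≤ x := hNx
            have := Real.log_le_log h2jpos h2jx
            rw [show ((2^j : ℕ):ℝ) = (2:ℝ)^j by push_cast; ring, Real.log_pow] at this
            rw [htjdef, ← hLdef] at *
            exact this
          have hsqtj : Real.sqrt tj ≤ sL := Real.sqrt_le_sqrt htjL
          have hηtj : η * tj ≤ (c/2) * Real.sqrt tj := by
            have hms : Real.sqrt tj * Real.sqrt tj = tj := Real.mul_self_sqrt htj0
            rw [hηdef]
            rw [div_mul_eq_mul_div, div_le_iff₀ (by positivity)]
            have hkey : c * Real.sqrt tj * Real.sqrt tj ≤ c * Real.sqrt tj * sL :=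
              mul_le_mul_of_nonneg_left hsqtj (mul_nonneg hc.le (Real.sqrt_nonneg tj))
            calc c * tj = c * Real.sqrt tj * Real.sqrt tj := by rw [mul_assoc, hms]
              _ ≤ c * Real.sqrt tj * sL := hkey
              _ = c/2 * Real.sqrt tj * (2*sL) := by ring
          have hsq2 : Real.sqrt tj ≤ Real.sqrt (tj + Real.log 2) :=
            Real.sqrt_le_sqrt (by linarith)
          have hsqtjj : Real.sqrt tj = Real.sqrt (j:ℝ) * Real.sqrt (Real.log 2) := by
            rw [htjdef, Real.sqrt_mul (Nat.cast_nonneg j)]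
          have hexp_le : -(σ * tj) + ((tj + Real.log 2) * (1/(k:ℝ)) - c * Real.sqrt (Real.log y))
              ≤ 1 - c₂ * Real.sqrt (j:ℝ) := by
            rw [hlogy]
            have hlk : Real.log 2 * (1/(k:ℝ)) ≤ 1 := by
              have hl2 : Real.log 2 ≤ 1 := by
                have := Real.log_two_lt_d9; linarith only [this]
              have h1k : 1/(k:ℝ) ≤ 1 := by
                rw [div_le_one hk0]; linarith only [hkR]
              have h1k0 : 0 ≤ 1/(k:ℝ) := by positivity
              calc Real.log 2 * (1/(k:ℝ)) ≤ 1 * (1/(k:ℝ)) :=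
                    mul_le_mul_of_nonneg_right hl2 h1k0
                _ = 1/(k:ℝ) := one_mul _
                _ ≤ 1 := h1k
            have hσtj : -(σ * tj) + tj * (1/(k:ℝ)) = η * tj := by
              rw [hσdef]; ring
            have hc₂j : c₂ * Real.sqrt (j:ℝ) = (c/2) * Real.sqrt tj := by
              rw [hc₂def, hsqtjj]; ring
            have hcs : c * Real.sqrt tj ≤ c * Real.sqrt (tj + Real.log 2) :=
              mul_le_mul_of_nonneg_left hsq2 hc.le
            have hdistr : (tj + Real.log 2) * (1/(k:ℝ))
                = tj*(1/(k:ℝ)) + Real.log 2*(1/(k:ℝ)) := by ring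
            rw [hdistr, hc₂j]
            linarith only [hσtj, hηtj, hlk, hcs]
          have hfinal : w * (C * (y ^ ((1:ℝ)/k) / Real.exp (c * Real.sqrt (Real.log y))))
              ≤ (3*C) * Real.exp (-(c₂ * Real.sqrt (j:ℝ))) := by
            rw [hwexp, hyk]
            rw [div_eq_mul_inv, ← Real.exp_neg, ← Real.exp_add]
            have he1 : Real.exp 1 ≤ 3 := by
              have := Real.exp_one_lt_d9; linarith only [this]
            have hep : (0:ℝ) ≤ Real.exp (-(c₂ * Real.sqrt (j:ℝ))) := (Real.exp_pos _).le
            calc Real.exp (-(σ * tj)) * (C * Real.exp ((tj + Real.log 2) * (1/(k:ℝ))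
                + -(c * Real.sqrt (Real.log y))))
                = C * (Real.exp (-(σ * tj)) * Real.exp ((tj + Real.log 2) * (1/(k:ℝ))
                  + -(c * Real.sqrt (Real.log y)))) := by ring
              _ = C * Real.exp (-(σ * tj) + ((tj + Real.log 2) * (1/(k:ℝ))
                  + -(c * Real.sqrt (Real.log y)))) := by rw [← Real.exp_add]
              _ ≤ C * Real.exp (1 - c₂ * Real.sqrt (j:ℝ)) :=
                  mul_le_mul_of_nonneg_left (Real.exp_le_exp.mpr (by
                    linarith only [hexp_le])) hC0
              _ = C * (Real.exp 1 * Real.exp (-(c₂ * Real.sqrt (j:ℝ)))) := by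
                  rw [show (1 - c₂ * Real.sqrt (j:ℝ)) = 1 + -(c₂ * Real.sqrt (j:ℝ)) by ring,
                    Real.exp_add]
              _ ≤ C * (3 * Real.exp (-(c₂ * Real.sqrt (j:ℝ)))) :=
                  mul_le_mul_of_nonneg_left (mul_le_mul_of_nonneg_right he1 hep) hC0
              _ = (3*C) * Real.exp (-(c₂ * Real.sqrt (j:ℝ))) := by ring
          calc ∑ p ∈ t, h p * (p:ℝ)^(-σ) ≤ w * ∑ p ∈ t, h p := hfib_le
            _ ≤ w * (C * (y ^ ((1:ℝ)/k) / Real.exp (c * Real.sqrt (Real.log y)))) :=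
                mul_le_mul_of_nonneg_left hsum1 hw0
            _ ≤ (3*C) * Real.exp (-(c₂ * Real.sqrt (j:ℝ))) := hfinal
      calc ∑ j ∈ range (N+1), ∑ p ∈ s.filter (fun p => Nat.log 2 p = j), h p * (p:ℝ)^(-σ)
          ≤ ∑ j ∈ range (N+1), (3*C) * Real.exp (-(c₂ * Real.sqrt (j:ℝ))) :=
            Finset.sum_le_sum fib
        _ = (3*C) * ∑ j ∈ range (N+1), Real.exp (-(c₂ * Real.sqrt (j:ℝ))) := by
            rw [Finset.mul_sum]
        _ ≤ (3*C) * (1 + 2048/c₂^4) :=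
            mul_le_mul_of_nonneg_left (aux_sum_exp_sqrt c₂ hc₂ _) (by positivity)
        _ = 3*C*(1 + 2048/c₂^4) := by ring
    rw [hBdef]
    linarith
  -- final assembly
  have hsumnn : 0 ≤ ∑ n ∈ Icc 1 N, h n := Finset.sum_nonneg fun n _ => hnonneg n
  have hrhspos : 0 < x ^ ((1:ℝ)/k) / Real.exp (c/2 * Real.sqrt (Real.log x)) := by positivity
  rw [Real.norm_eq_abs, Real.norm_eq_abs, abs_of_nonneg hsumnn, abs_of_pos hrhspos]
  have hLη : L * η = c/2 * sL := by
    rw [hηdef, ← hsLsq]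
    field_simp
  have hxσ : x ^ σ = x ^ ((1:ℝ)/k) / Real.exp (c/2 * sL) := by
    rw [Real.rpow_def_of_pos hx0, Real.rpow_def_of_pos hx0, ← hLdef, div_eq_mul_inv,
      ← Real.exp_neg, ← Real.exp_add]
    congr 1
    rw [hσdef]
    linear_combination -hLη
  have hxσnn : 0 ≤ x ^ σ := Real.rpow_nonneg hx0.le _
  calc ∑ n ∈ Icc 1 N, h n ≤ x^σ * ∑ n ∈ Icc 1 N, f n := step0
    _ ≤ x^σ * ∏ p ∈ P, ∑ a ∈ range (N+1), f (p^a) := mul_le_mul_of_nonneg_left stepA hxσnn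
    _ ≤ x^σ * Real.exp (K * T) := mul_le_mul_of_nonneg_left stepC hxσnn
    _ ≤ x^σ * Real.exp (K * B) := by
        apply mul_le_mul_of_nonneg_left _ hxσnn
        exact Real.exp_le_exp.mpr (mul_le_mul_of_nonneg_left stepD hKpos.le)
    _ = E * (x ^ ((1:ℝ)/k) / Real.exp (c/2 * Real.sqrt (Real.log x))) := by
        rw [hxσ, hEdef]
        rw [show Real.sqrt (Real.log x) = sL by rw [hsLdef, hLdef]]
        ring
end

section
/- Let g: ℕ → {-1, 1} be completely multiplicative, k ≥ 3 an odd integer, f = μ_k² · g, and h = f ∗ g^{-1} (Dirichlet convolution with the Dirichlet inverse of g). Then h(n) = μ(m) g(m) if n = m^k for some integer m, and h(n) = 0 otherwise. -/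
open Finset

open scoped Classical in
noncomputable def Czf (k : ℕ) : ℕ → ℤ := fun d =>
  if h : ∃ m, d = m ^ k then ArithmeticFunction.moebius h.choose else 0

open scoped Classical in
noncomputable def Fzf (k : ℕ) : ℕ → ℤ := fun n =>
  if ∀ p : ℕ, p.Prime → ¬ p ^ k ∣ n then 1 else 0

open scoped Classical in
lemma Czf_pow (k : ℕ) (hk : k ≠ 0) (m : ℕ) :
    Czf k (m ^ k) = ArithmeticFunction.moebius m := by
  have h : ∃ m', m ^ k = m' ^ k := ⟨m, rfl⟩
  simp only [Czf, dif_pos h]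
  congr 1
  exact (Nat.pow_left_injective hk h.choose_spec).symm

open scoped Classical in
lemma Czf_eq_zero (k : ℕ) {d : ℕ} (hd : ¬ ∃ m, d = m ^ k) : Czf k d = 0 := by
  simp only [Czf, dif_neg hd]

open ArithmeticFunction in
open scoped Classical in
lemma key_sum (k : ℕ) (hk : k ≠ 0) (n : ℕ) (hn : n ≠ 0) :
    ∑ d ∈ n.divisors, Czf k d = Fzf k n := by
  set S := n.primeFactors.filter (fun p => p ^ k ∣ n) with hSdef
  set r := ∏ p ∈ S, p with hrdef
  have hSprime : ∀ p ∈ S, p.Prime := fun p hp =>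
    Nat.prime_of_mem_primeFactors (Finset.mem_filter.mp hp).1
  have hr0 : r ≠ 0 := Finset.prod_ne_zero_iff.mpr fun p hp => (hSprime p hp).pos.ne'
  have hmemS : ∀ p : ℕ, p.Prime → p ^ k ∣ n → p ∈ S := by
    intro p pp hpk
    exact Finset.mem_filter.mpr
      ⟨Nat.mem_primeFactors.mpr ⟨pp, dvd_trans (dvd_pow_self p hk) hpk, hn⟩, hpk⟩
  have hequiv : ∀ m : ℕ, Squarefree m → (m ^ k ∣ n ↔ m ∣ r) := by
    intro m hm
    constructor
    · intro hmk
      have hsub : m.primeFactors ⊆ S := by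
        intro p hp
        have pp := Nat.prime_of_mem_primeFactors hp
        have hpm : p ∣ m := Nat.dvd_of_mem_primeFactors hp
        exact hmemS p pp (dvd_trans (pow_dvd_pow_of_dvd hpm k) hmk)
      calc m = ∏ p ∈ m.primeFactors, p := (Nat.prod_primeFactors_of_squarefree hm).symm
        _ ∣ r := Finset.prod_dvd_prod_of_subset _ _ _ hsub
    · intro hmr
      have hm0 : m ≠ 0 := hm.ne_zero
      rw [← Nat.factorization_le_iff_dvd (pow_ne_zero k hm0) hn]
      intro p
      rcases Nat.eq_zero_or_pos (m.factorization p) with h0 | hpos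
      · simp [Nat.factorization_pow, h0]
      · have hp : p ∈ m.primeFactors := by
          rw [← Nat.support_factorization]
          exact Finsupp.mem_support_iff.mpr hpos.ne'
        have pp := Nat.prime_of_mem_primeFactors hp
        have hpr : p ∣ r := dvd_trans (Nat.dvd_of_mem_primeFactors hp) hmr
        obtain ⟨q, hq, hpq⟩ := (Prime.dvd_finset_prod_iff pp.prime _).mp hpr
        have hpS : p ∈ S := by
          rwa [(Nat.prime_dvd_prime_iff_eq pp (hSprime q hq)).mp hpq]
        have hpk : p ^ k ∣ n := (Finset.mem_filter.mp hpS).2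
        have hkle : k ≤ n.factorization p :=
          (Nat.Prime.pow_dvd_iff_le_factorization pp hn).mp hpk
        have hle1 : m.factorization p ≤ 1 := hm.natFactorization_le_one p
        calc (m ^ k).factorization p = k * m.factorization p := by
              rw [Nat.factorization_pow]; simp
          _ ≤ k * 1 := Nat.mul_le_mul_left k hle1
          _ = k := mul_one k
          _ ≤ n.factorization p := hkle
  have stepA : ∑ d ∈ n.divisors, Czf k d
      = ∑ m ∈ n.divisors.filter (fun m => m ^ k ∣ n), (moebius m : ℤ) := by
    refine (Finset.sum_bij_ne_zero (fun m _ _ => m ^ k) ?_ ?_ ?_ ?_).symm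
    · intro m h₁ h₂
      exact Nat.mem_divisors.mpr ⟨(Finset.mem_filter.mp h₁).2, hn⟩
    · intro a₁ h₁₁ h₁₂ a₂ h₂₁ h₂₂ heq
      exact Nat.pow_left_injective hk heq
    · intro d hd hCd
      have hex : ∃ m, d = m ^ k := by
        by_contra hne
        exact hCd (Czf_eq_zero k hne)
      obtain ⟨m, rfl⟩ := hex
      have hmk : m ^ k ∣ n := (Nat.mem_divisors.mp hd).1
      have hmem : m ∈ n.divisors.filter (fun m => m ^ k ∣ n) :=
        Finset.mem_filter.mpr
          ⟨Nat.mem_divisors.mpr ⟨dvd_trans (dvd_pow_self m hk) hmk, hn⟩, hmk⟩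
      refine ⟨m, hmem, ?_, rfl⟩
      rwa [Czf_pow k hk m] at hCd
    · intro m h₁ h₂
      exact (Czf_pow k hk m).symm
  have hAB : (n.divisors.filter (fun m => m ^ k ∣ n)).filter Squarefree
      = r.divisors.filter Squarefree := by
    ext m
    simp only [Finset.mem_filter, Nat.mem_divisors]
    constructor
    · rintro ⟨⟨-, hmk⟩, hsq⟩
      exact ⟨⟨(hequiv m hsq).mp hmk, hr0⟩, hsq⟩
    · rintro ⟨⟨hmr, -⟩, hsq⟩
      have hmk := (hequiv m hsq).mpr hmr
      exact ⟨⟨⟨dvd_trans (dvd_pow_self m hk) hmk, hn⟩, hmk⟩, hsq⟩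
  have hmu : ∀ (s : Finset ℕ), ∀ x ∈ s, (moebius x : ℤ) ≠ 0 → Squarefree x := by
    intro s x _ hx
    by_contra hns
    exact hx (moebius_eq_zero_of_not_squarefree hns)
  have stepB : ∑ m ∈ n.divisors.filter (fun m => m ^ k ∣ n), (moebius m : ℤ)
      = ∑ m ∈ r.divisors, (moebius m : ℤ) := by
    rw [← Finset.sum_filter_of_ne (hmu _), hAB, Finset.sum_filter_of_ne (hmu _)]
  have stepC : ∑ m ∈ r.divisors, (moebius m : ℤ) = if r = 1 then 1 else 0 := by
    have h1 : (moebius * zeta : ArithmeticFunction ℤ) r = (1 : ArithmeticFunction ℤ) r := by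
      rw [moebius_mul_coe_zeta]
    rwa [coe_mul_zeta_apply, one_apply] at h1
  have stepD : (r = 1) ↔ (∀ p : ℕ, p.Prime → ¬ p ^ k ∣ n) := by
    constructor
    · intro hr1 p pp hpk
      have hp : p ∣ 1 := hr1 ▸ Finset.dvd_prod_of_mem _ (hmemS p pp hpk)
      exact pp.ne_one (Nat.dvd_one.mp hp)
    · intro hfree
      have hS : S = ∅ := by
        ext p
        simp only [hSdef, Finset.mem_filter, Nat.mem_primeFactors, Finset.notMem_empty,
          iff_false, not_and]
        rintro ⟨pp, -, -⟩ hpk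
        exact hfree p pp hpk
      rw [hrdef, hS, Finset.prod_empty]
  rw [stepA, stepB, stepC]
  simp only [Fzf]
  by_cases hc : ∀ p : ℕ, p.Prime → ¬ p ^ k ∣ n
  · rw [if_pos hc, if_pos (stepD.mpr hc)]
  · rw [if_neg hc, if_neg (fun h => hc (stepD.mp h))]

open scoped Classical in
theorem stmt7 (k : ℕ) (hk : 3 ≤ k) (hkodd : Odd k) (g : ℕ → ℝ)
    (hg1 : g 1 = 1) (hgm : ∀ m n : ℕ, g (m * n) = g m * g n)
    (hgpm : ∀ n : ℕ, 0 < n → g n = 1 ∨ g n = -1)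
    (f h : ℕ → ℝ)
    (hf : ∀ n : ℕ, f n = (if ∀ p : ℕ, p.Prime → ¬ p ^ k ∣ n then 1 else 0) * g n)
    (hh : ∀ n : ℕ, h n = ∑ d ∈ n.divisors,
      f d * ((ArithmeticFunction.moebius (n / d) : ℝ) * g (n / d))) :
    (∀ m : ℕ, h (m ^ k) = (ArithmeticFunction.moebius m : ℝ) * g m) ∧
    (∀ n : ℕ, (¬ ∃ m : ℕ, n = m ^ k) → h n = 0) := by
  have hk0 : k ≠ 0 := by omega
  have hkey : ∀ n > 0, ∑ d ∈ n.divisors, Czf k d = Fzf k n :=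
    fun n hn => key_sum k hk0 n hn.ne'
  have hinv := (ArithmeticFunction.sum_eq_iff_sum_mul_moebius_eq (R := ℤ)
    (f := Czf k) (g := Fzf k)).mp hkey
  simp only [Int.cast_id] at hinv
  have hform : ∀ n : ℕ, 0 < n → h n = g n * ((Czf k n : ℤ) : ℝ) := by
    intro n hn
    rw [hh n]
    have h1 : ∀ d ∈ n.divisors, f d * ((ArithmeticFunction.moebius (n / d) : ℝ) * g (n / d))
        = g n * (((ArithmeticFunction.moebius (n / d) * Fzf k d : ℤ)) : ℝ) := by
      intro d hd
      obtain ⟨hdvd, -⟩ := Nat.mem_divisors.mp hd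
      have hgd : g d * g (n / d) = g n := by
        rw [← hgm, Nat.mul_div_cancel' hdvd]
      have hFd : ((Fzf k d : ℤ) : ℝ) = if ∀ p : ℕ, p.Prime → ¬ p ^ k ∣ d then 1 else 0 := by
        simp only [Fzf]
        split_ifs <;> simp
      rw [hf d, ← hFd, ← hgd]
      push_cast
      ring
    rw [Finset.sum_congr rfl h1, ← Finset.mul_sum]
    congr 1
    norm_cast
    rw [← hinv n hn,
      ← Nat.sum_divisorsAntidiagonal' (f := fun x y => (ArithmeticFunction.moebius x * Fzf k y : ℤ))]
  constructor
  · intro m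
    rcases Nat.eq_zero_or_pos m with rfl | hm
    · rw [zero_pow hk0, hh 0]
      simp
    · rw [hform _ (pow_pos hm k), Czf_pow k hk0 m]
      have hgmk : g (m ^ k) = g m := by
        have hpow : ∀ j : ℕ, g (m ^ j) = g m ^ j := by
          intro j
          induction j with
          | zero => simpa using hg1
          | succ i ih => rw [pow_succ, pow_succ, hgm, ih]
        rw [hpow k]
        rcases hgpm m hm with h1 | h1 <;> rw [h1]
        · exact one_pow k
        · exact hkodd.neg_one_pow
      rw [hgmk]
      ring
  · intro n hne
    have hn : 0 < n := by
      rcases Nat.eq_zero_or_pos n with rfl | hpos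
      · exact absurd ⟨0, by rw [zero_pow hk0]⟩ hne
      · exact hpos
    rw [hform n hn, Czf_eq_zero k hne]
    simp
end

section
/- Let g: ℕ → {-1, 1} be completely multiplicative, k ≥ 2 an even integer, f = μ_k² · g, and h = f ∗ g^{-1}. Then h(n) = μ(m) if n = m^k for some integer m, and h(n) = 0 otherwise. -/
open Finset ArithmeticFunction
open scoped ArithmeticFunction.Moebius

open scoped Classical

noncomputable def Afun (k : ℕ) : ArithmeticFunction ℤ :=
  ⟨fun n => if ∀ p : ℕ, p.Prime → ¬ p ^ k ∣ n then 1 else 0, by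
    beta_reduce; rw [if_neg]; push_neg; exact ⟨2, Nat.prime_two, dvd_zero _⟩⟩

noncomputable def Sfun (k : ℕ) : ArithmeticFunction ℤ :=
  ⟨fun n => if h : ∃ m : ℕ, m ^ k = n then μ h.choose else 0, by
    beta_reduce
    by_cases h : ∃ m : ℕ, m ^ k = 0
    · rw [dif_pos h]
      have h1 := h.choose_spec
      have hk0 : k ≠ 0 := by rintro rfl; simp at h1
      have h2 : h.choose = 0 := by
        rwa [pow_eq_zero_iff hk0] at h1
      rw [h2]; simp
    · rw [dif_neg h]⟩

lemma Sfun_pow (k : ℕ) (hk : k ≠ 0) (m : ℕ) : Sfun k (m ^ k) = μ m := by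
  have hex : ∃ a : ℕ, a ^ k = m ^ k := ⟨m, rfl⟩
  show dite _ _ _ = _
  rw [dif_pos hex]
  congr 1
  exact Nat.pow_left_injective hk hex.choose_spec

lemma Sfun_not_pow (k : ℕ) {n : ℕ} (hn : ¬ ∃ m : ℕ, m ^ k = n) : Sfun k n = 0 := by
  show dite _ _ _ = _
  rw [dif_neg hn]

lemma Afun_apply (k n : ℕ) :
    Afun k n = if ∀ p : ℕ, p.Prime → ¬ p ^ k ∣ n then 1 else 0 := rfl

lemma kfree_mul (k : ℕ) (hk : k ≠ 0) {m n : ℕ} (hmn : Nat.Coprime m n) :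
    (∀ p : ℕ, p.Prime → ¬ p ^ k ∣ m * n) ↔
      (∀ p : ℕ, p.Prime → ¬ p ^ k ∣ m) ∧ (∀ p : ℕ, p.Prime → ¬ p ^ k ∣ n) := by
  constructor
  · intro H
    exact ⟨fun p hp hd => H p hp (hd.mul_right n), fun p hp hd => H p hp (hd.mul_left m)⟩
  · rintro ⟨Hm, Hn⟩ p hp hd
    have hpmn : p ∣ m * n := (dvd_pow_self p hk).trans hd
    rcases hp.dvd_mul.mp hpmn with hpm | hpn
    · have hc : Nat.Coprime p n := Nat.Coprime.coprime_dvd_left hpm hmn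
      exact Hm p hp ((Nat.Coprime.pow_left k hc).dvd_of_dvd_mul_right hd)
    · have hc : Nat.Coprime p m := Nat.Coprime.coprime_dvd_left hpn hmn.symm
      exact Hn p hp ((Nat.Coprime.pow_left k hc).dvd_of_dvd_mul_left hd)

lemma Afun_mult (k : ℕ) (hk : k ≠ 0) : (Afun k).IsMultiplicative := by
  constructor
  · rw [Afun_apply, if_pos]
    intro p hp hd
    have h1 : p ^ k = 1 := Nat.eq_one_of_dvd_one hd
    have := hp.one_lt
    have := Nat.one_lt_pow hk ‹1 < p›
    omega
  · intro m n hmn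
    rw [Afun_apply, Afun_apply, Afun_apply]
    by_cases h1 : ∀ p : ℕ, p.Prime → ¬ p ^ k ∣ m
    · by_cases h2 : ∀ p : ℕ, p.Prime → ¬ p ^ k ∣ n
      · rw [if_pos h1, if_pos h2, if_pos ((kfree_mul k hk hmn).mpr ⟨h1, h2⟩)]; ring
      · rw [if_neg h2, if_neg (fun H => h2 ((kfree_mul k hk hmn).mp H).2)]; ring
    · rw [if_neg h1, if_neg (fun H => h1 ((kfree_mul k hk hmn).mp H).1)]; ring

lemma Sfun_mult (k : ℕ) (hk : k ≠ 0) : (Sfun k).IsMultiplicative := by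
  constructor
  · have := Sfun_pow k hk 1
    simpa using this
  · intro m n hmn
    by_cases h : ∃ c : ℕ, c ^ k = m * n
    · obtain ⟨c, hc⟩ := h
      have hgcd : IsUnit (gcd m n) := by
        rw [Nat.isUnit_iff]
        exact hmn
      obtain ⟨a, ha⟩ := exists_eq_pow_of_mul_eq_pow hgcd hc.symm
      have hgcd' : IsUnit (gcd n m) := by
        rw [Nat.isUnit_iff]
        exact hmn.symm
      obtain ⟨b, hb⟩ := exists_eq_pow_of_mul_eq_pow hgcd' (by rw [mul_comm]; exact hc.symm)
      have hadvd : a ∣ m := ha ▸ dvd_pow_self a hk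
      have hbdvd : b ∣ n := hb ▸ dvd_pow_self b hk
      have hab : Nat.Coprime a b :=
        Nat.Coprime.coprime_dvd_left hadvd (Nat.Coprime.coprime_dvd_right hbdvd hmn)
      have hmn' : m * n = (a * b) ^ k := by rw [ha, hb, mul_pow]
      rw [hmn', ha, hb, Sfun_pow k hk, Sfun_pow k hk, Sfun_pow k hk,
        ArithmeticFunction.isMultiplicative_moebius.map_mul_of_coprime hab]
    · rw [Sfun_not_pow k (fun ⟨c, hc⟩ => h ⟨c, hc⟩)]
      by_cases hm : ∃ a : ℕ, a ^ k = m
      · obtain ⟨a, ha⟩ := hm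
        have hn : ¬ ∃ b : ℕ, b ^ k = n := by
          rintro ⟨b, hb⟩
          exact h ⟨a * b, by rw [mul_pow, ha, hb]⟩
        rw [Sfun_not_pow k hn, mul_zero]
      · rw [Sfun_not_pow k hm, zero_mul]

lemma Afun_pp (k : ℕ) (hk : k ≠ 0) {p : ℕ} (hp : p.Prime) (i : ℕ) :
    Afun k (p ^ i) = if i < k then 1 else 0 := by
  rw [Afun_apply]
  by_cases hik : i < k
  · rw [if_pos hik, if_pos]
    intro q hq hd
    have hqp : q = p := by
      have h1 : q ∣ p ^ i := (dvd_pow_self q hk).trans hd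
      exact (Nat.prime_dvd_prime_iff_eq hq hp).mp (hq.dvd_of_dvd_pow h1)
    subst hqp
    rw [Nat.pow_dvd_pow_iff_le_right hp.one_lt] at hd
    omega
  · rw [if_neg hik, if_neg]
    push_neg
    exact ⟨p, hp, pow_dvd_pow p (by omega)⟩

lemma BS (k : ℕ) (hk : k ≠ 0) :
    Afun k * (ArithmeticFunction.moebius : ArithmeticFunction ℤ) = Sfun k := by
  rw [ArithmeticFunction.IsMultiplicative.eq_iff_eq_on_prime_powers _
    ((Afun_mult k hk).mul ArithmeticFunction.isMultiplicative_moebius) _ (Sfun_mult k hk)]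
  intro p a hp
  have hLHS : (Afun k * (ArithmeticFunction.moebius : ArithmeticFunction ℤ)) (p ^ a)
      = ∑ i ∈ range (a + 1), Afun k (p ^ i) * (μ (p ^ a / p ^ i) : ℤ) := by
    rw [ArithmeticFunction.mul_apply,
      Nat.sum_divisorsAntidiagonal (fun x y => Afun k x * (μ y : ℤ)),
      Nat.sum_divisors_prime_pow hp]
  rcases Nat.eq_zero_or_pos a with rfl | ha
  · rw [hLHS]
    rw [Finset.sum_range_one]
    simp only [pow_zero, Nat.div_one]
    have := Sfun_pow k hk 1
    simp only [one_pow] at this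
    rw [this]
    have h1 := Afun_pp k hk hp 0
    simp only [pow_zero] at h1
    rw [h1, if_pos (by omega)]
    simp
  · -- a ≥ 1
    obtain ⟨c, rfl⟩ : ∃ c, a = c + 1 := ⟨a - 1, by omega⟩
    have hdiv : ∀ i, i ≤ c + 1 → p ^ (c + 1) / p ^ i = p ^ (c + 1 - i) :=
      fun i hi => Nat.pow_div hi hp.pos
    have hsum0 : ∑ i ∈ range c, Afun k (p ^ i) * (μ (p ^ (c + 1) / p ^ i) : ℤ) = 0 := by
      apply Finset.sum_eq_zero
      intro i hi
      rw [mem_range] at hi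
      rw [hdiv i (by omega), ArithmeticFunction.moebius_apply_prime_pow hp (by omega),
        if_neg (by omega)]
      ring
    rw [hLHS, Finset.sum_range_succ, Finset.sum_range_succ, hsum0, zero_add,
      hdiv c (by omega), hdiv (c + 1) le_rfl, Nat.sub_self, Nat.add_sub_cancel_left, pow_one,
      pow_zero, ArithmeticFunction.moebius_apply_prime hp, ArithmeticFunction.moebius_apply_one,
      Afun_pp k hk hp, Afun_pp k hk hp]
    have hR : Sfun k (p ^ (c + 1)) = if c + 1 = k then -1 else 0 := by
      by_cases hak : c + 1 = k
      · rw [hak]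
        have := Sfun_pow k hk p
        rw [this, ArithmeticFunction.moebius_apply_prime hp, if_pos rfl]
      · rw [if_neg hak]
        by_cases hdvd : k ∣ c + 1
        · obtain ⟨j, hj⟩ := hdvd
          have hj2 : 2 ≤ j := by
            rcases j with _ | _ | j <;> omega
          have : p ^ (c + 1) = (p ^ j) ^ k := by rw [← pow_mul, mul_comm, ← hj]
          rw [this, Sfun_pow k hk, ArithmeticFunction.moebius_apply_prime_pow hp (by omega),
            if_neg (by omega)]
        · apply Sfun_not_pow
          rintro ⟨m, hm⟩
          have hmdvd : m ∣ p ^ (c + 1) := hm ▸ dvd_pow_self m hk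
          obtain ⟨j, hjle, rfl⟩ := (Nat.dvd_prime_pow hp).mp hmdvd
          rw [← pow_mul] at hm
          have : j * k = c + 1 := Nat.pow_right_injective hp.two_le hm
          exact hdvd ⟨j, by rw [← this, mul_comm]⟩
    rw [hR]
    split_ifs <;> omega

open scoped Classical in
theorem stmt8 (k : ℕ) (hk : 2 ≤ k) (hkeven : Even k) (g : ℕ → ℝ)
    (hg1 : g 1 = 1) (hgm : ∀ m n : ℕ, g (m * n) = g m * g n)
    (hgpm : ∀ n : ℕ, 0 < n → g n = 1 ∨ g n = -1)
    (f h : ℕ → ℝ)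
    (hf : ∀ n : ℕ, f n = (if ∀ p : ℕ, p.Prime → ¬ p ^ k ∣ n then 1 else 0) * g n)
    (hh : ∀ n : ℕ, h n = ∑ d ∈ n.divisors,
      f d * ((ArithmeticFunction.moebius (n / d) : ℝ) * g (n / d))) :
    (∀ m : ℕ, h (m ^ k) = (ArithmeticFunction.moebius m : ℝ)) ∧
    (∀ n : ℕ, (¬ ∃ m : ℕ, n = m ^ k) → h n = 0) := by
  have hk0 : k ≠ 0 := by omega
  have key : ∀ n : ℕ, h n = g n * (((Afun k * (μ : ArithmeticFunction ℤ)) n : ℤ) : ℝ) := by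
    intro n
    rcases eq_or_ne n 0 with rfl | hn
    · rw [hh 0]; simp
    rw [hh n, ArithmeticFunction.mul_apply,
      Nat.sum_divisorsAntidiagonal (fun x y => Afun k x * (μ y : ℤ))]
    push_cast
    rw [Finset.mul_sum]
    apply Finset.sum_congr rfl
    intro d hd
    rw [Nat.mem_divisors] at hd
    have hgd : g d * g (n / d) = g n := by
      rw [← hgm, Nat.mul_div_cancel' hd.1]
    rw [hf d, Afun_apply, ← hgd]
    split_ifs with hc
    · push_cast; ring
    · push_cast; ring
  have hgpow : ∀ (m j : ℕ), g (m ^ j) = g m ^ j := by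
    intro m j
    induction j with
    | zero => simpa using hg1
    | succ j ih => rw [pow_succ, hgm, ih, pow_succ]
  constructor
  · intro m
    rcases eq_or_ne m 0 with rfl | hm
    · rw [zero_pow hk0, key 0]
      simp
    · rw [key, BS k hk0, Sfun_pow k hk0, hgpow]
      rcases hgpm m (Nat.pos_of_ne_zero hm) with h1 | h1 <;> rw [h1]
      · rw [one_pow, one_mul]
      · rw [hkeven.neg_one_pow, one_mul]
  · intro n hn
    rw [key, BS k hk0, Sfun_not_pow k (fun ⟨m, hm⟩ => hn ⟨m, hm.symm⟩)]
    simp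
end

section
/- Let χ be a Dirichlet character modulo q (with q having ω(q) distinct prime factors) and let g: ℕ → {-1, 1} be the completely multiplicative function with g(n) = χ(n) for gcd(n, q) = 1 and g(p) = 1 for each prime p | q. If the partial sums of χ are bounded, then for every α > 0, ∑_{n ≤ x} g(n) ≪ x^α. Moreover limsup_{x→∞} |M_g(x)| / (log x)^{ω(q)} ≤ (max_{y ≥ 1} |M_χ(y)|/ω(q)!) ∏_{p | q} 1/(log p). -/
open Finset Filter Asymptotics

lemma pow_step (t c : ℝ) (ht : 0 ≤ t) (hc : 0 ≤ c) (k : ℕ) :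
    t ^ k * ((k + 1) * c) ≤ (t + c) ^ (k + 1) - t ^ (k + 1) := by
  induction k with
  | zero => simp
  | succ k ih =>
    have h2 : (t + c) * (t ^ (k+1) + t ^ k * ((k+1)*c)) ≤ (t + c) * (t + c) ^ (k+1) := by
      apply mul_le_mul_of_nonneg_left _ (by linarith)
      linarith [ih]
    have e1 : t ^ (k+1) = t ^ k * t := by ring
    have e2 : t ^ (k+2) = t ^ k * t * t := by ring
    have hkk : (0:ℝ) ≤ (k:ℝ)+1 := by positivity
    have h3 : t^(k+2) + t^(k+1) * ((k+2)*c) ≤ (t + c) * (t ^ (k+1) + t ^ k * ((k+1)*c)) := by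
      have key : (t + c) * (t ^ (k+1) + t ^ k * ((k+1)*c)) - (t^(k+2) + t^(k+1) * ((k+2)*c))
          = ((k:ℝ)+1) * c^2 * t^k := by rw [e1, e2]; ring
      nlinarith [mul_nonneg (mul_nonneg hkk (sq_nonneg c)) (pow_nonneg ht k)]
    have h4 : (t + c) ^ (k + 2) = (t + c) * (t + c) ^ (k + 1) := by ring
    push_cast at h3 ⊢
    linarith

lemma decomp (q : ℕ) (g : ℕ → ℝ)
    (hgm : ∀ m n : ℕ, g (m * n) = g m * g n)
    (P : Finset ℕ) (p : ℕ) (hp : p.Prime) (hpq : p ∈ q.primeFactors) (hpP : p ∉ P)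
    (hgp1 : ∀ a : ℕ, g (p ^ a) = 1) (N : ℕ) (hN : N ≠ 0) :
    ∑ n ∈ Icc 1 N, (if ∀ r ∈ q.primeFactors \ insert p P, ¬ r ∣ n then g n else 0)
      = ∑ a ∈ range (Nat.log p N + 1), ∑ m ∈ Icc 1 (N / p ^ a),
          (if ∀ r ∈ q.primeFactors \ P, ¬ r ∣ m then g m else 0) := by
  classical
  rw [← Finset.sum_filter]
  conv_rhs => rw [show (fun a => ∑ m ∈ Icc 1 (N / p ^ a), (if ∀ r ∈ q.primeFactors \ P, ¬ r ∣ m then g m else 0)) = fun a => ∑ m ∈ (Icc 1 (N / p ^ a)).filter (fun m => ∀ r ∈ q.primeFactors \ P, ¬ r ∣ m), g m from funext fun a => (Finset.sum_filter _ _).symm]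
  rw [Finset.sum_sigma']
  refine Finset.sum_nbij' (fun n => ⟨n.factorization p, n / p ^ n.factorization p⟩)
    (fun x => p ^ x.1 * x.2) ?_ ?_ ?_ ?_ ?_
  · intro n hn
    simp only [Finset.mem_filter, Finset.mem_Icc] at hn
    obtain ⟨⟨hn1, hnN⟩, hcond⟩ := hn
    have hn0 : n ≠ 0 := by omega
    simp only [Finset.mem_sigma, Finset.mem_range, Finset.mem_filter, Finset.mem_Icc]
    refine ⟨Nat.lt_succ_of_le ?_, ⟨⟨Nat.ordCompl_pos p hn0, Nat.div_le_div_right hnN⟩, ?_⟩⟩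
    · exact (Nat.le_log_iff_pow_le hp.one_lt hN).2 (le_trans (Nat.ordProj_le p hn0) hnN)
    · intro r hr hrd
      rcases eq_or_ne r p with rfl | hrp
      · exact Nat.not_dvd_ordCompl hp hn0 hrd
      · have : r ∣ n := hrd.trans (Nat.ordCompl_dvd n p)
        rw [Finset.mem_sdiff] at hr
        exact hcond r (Finset.mem_sdiff.2 ⟨hr.1, by simp [Finset.mem_insert, hrp, hr.2]⟩) this
  · intro x hx
    simp only [Finset.mem_sigma, Finset.mem_range, Finset.mem_filter, Finset.mem_Icc] at hx
    obtain ⟨ha, ⟨⟨hm1, hmN⟩, hcond⟩⟩ := hx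
    simp only [Finset.mem_filter, Finset.mem_Icc]
    have hpa : 0 < p ^ x.1 := pow_pos hp.pos _
    refine ⟨⟨Nat.one_le_iff_ne_zero.2 (by positivity), ?_⟩, ?_⟩
    · rw [mul_comm]
      exact (Nat.le_div_iff_mul_le hpa).1 hmN
    · intro r hr hrd
      rw [Finset.mem_sdiff, Finset.mem_insert] at hr
      push_neg at hr
      have rp : r.Prime := Nat.prime_of_mem_primeFactors hr.1
      rcases (Nat.Prime.dvd_mul rp).1 hrd with h | h
      · exact hr.2.1 ((Nat.prime_dvd_prime_iff_eq rp hp).1 (rp.dvd_of_dvd_pow h))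
      · exact hcond r (Finset.mem_sdiff.2 ⟨hr.1, hr.2.2⟩) h
  · intro n hn
    exact Nat.ordProj_mul_ordCompl_eq_self n p
  · intro x hx
    simp only [Finset.mem_sigma, Finset.mem_range, Finset.mem_filter, Finset.mem_Icc] at hx
    obtain ⟨ha, ⟨⟨hm1, hmN⟩, hcond⟩⟩ := hx
    have hm0 : x.2 ≠ 0 := by omega
    have hpm : ¬ p ∣ x.2 := hcond p (Finset.mem_sdiff.2 ⟨hpq, hpP⟩)
    have hfa : (p ^ x.1 * x.2).factorization p = x.1 := by
      rw [Nat.factorization_mul (pow_ne_zero _ hp.pos.ne') hm0, hp.factorization_pow]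
      simp [Nat.factorization_eq_zero_of_not_dvd hpm]
    refine Sigma.ext hfa (heq_of_eq ?_)
    show p ^ x.1 * x.2 / p ^ ((p ^ x.1 * x.2).factorization p) = x.2
    rw [hfa, Nat.mul_div_cancel_left _ (pow_pos hp.pos _)]
  · intro n hn
    conv_lhs => rw [← Nat.ordProj_mul_ordCompl_eq_self n p]
    rw [hgm, hgp1, one_mul]

lemma key (q : ℕ) (hq : 1 < q) (χ : DirichletCharacter ℝ q) (g : ℕ → ℝ)
    (hg1 : g 1 = 1) (hgm : ∀ m n : ℕ, g (m * n) = g m * g n)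
    (hgq : ∀ p : ℕ, p.Prime → p ∣ q → g p = 1)
    (hgχ : ∀ n : ℕ, Nat.Coprime n q → g n = χ (n : ZMod q))
    (B : ℝ) (hB : ∀ y : ℝ, |∑ n ∈ Icc 1 ⌊y⌋₊, χ (n : ZMod q)| ≤ B)
    (P : Finset ℕ) (hP : P ⊆ q.primeFactors) :
    ∀ x : ℝ, 1 ≤ x →
      |∑ n ∈ Icc 1 ⌊x⌋₊, (if ∀ r ∈ q.primeFactors \ P, ¬ r ∣ n then g n else 0)|
        ≤ (⨆ y : ℝ, |∑ m ∈ Icc 1 ⌊y⌋₊, χ (m : ZMod q)|) *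
          (Real.log x + ∑ p ∈ P, Real.log p) ^ P.card /
          ((P.card).factorial * ∏ p ∈ P, Real.log p) := by
  classical
  have hq0 : q ≠ 0 := by omega
  haveI : NeZero q := ⟨hq0⟩
  have hbdd : BddAbove (Set.range fun y : ℝ => |∑ m ∈ Icc 1 ⌊y⌋₊, χ (m : ZMod q)|) := by
    refine ⟨B, ?_⟩
    rintro z ⟨y, rfl⟩
    exact hB y
  set S : ℝ := ⨆ y : ℝ, |∑ m ∈ Icc 1 ⌊y⌋₊, χ (m : ZMod q)| with hSdef
  have hS0 : 0 ≤ S := by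
    have := le_ciSup hbdd (0 : ℝ)
    simp only [Nat.floor_zero] at this
    calc (0:ℝ) ≤ |∑ m ∈ Icc 1 ⌊(0:ℝ)⌋₊, χ (m : ZMod q)| := abs_nonneg _
      _ ≤ S := le_ciSup hbdd 0
  induction P using Finset.induction_on with
  | empty =>
    intro x hx
    have hval : ∀ n ∈ Icc 1 ⌊x⌋₊,
        (if ∀ r ∈ q.primeFactors \ (∅ : Finset ℕ), ¬ r ∣ n then g n else 0) = χ (n : ZMod q) := by
      intro n hn
      simp only [Finset.sdiff_empty]
      by_cases hco : Nat.Coprime n q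
      · rw [if_pos, hgχ n hco]
        intro r hr hrd
        have rp := Nat.prime_of_mem_primeFactors hr
        have : r ∣ 1 := (Nat.dvd_gcd hrd (Nat.dvd_of_mem_primeFactors hr)).trans hco.dvd
        exact rp.one_lt.ne' (Nat.dvd_one.mp this)
      · rw [if_neg, eq_comm, MulChar.map_nonunit]
        · rwa [ZMod.isUnit_iff_coprime]
        · push_neg
          obtain ⟨r, rp, hrd⟩ := Nat.exists_prime_and_dvd (fun h => hco h)
          exact ⟨r, Nat.mem_primeFactors.2 ⟨rp, (hrd.trans (Nat.gcd_dvd_right n q)), hq0⟩,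
            hrd.trans (Nat.gcd_dvd_left n q)⟩
    rw [Finset.sum_congr rfl hval]
    simpa using le_ciSup hbdd x
  | @insert p P hpP IH =>
    have hpq : p ∈ q.primeFactors := hP (Finset.mem_insert_self p P)
    have hPq : P ⊆ q.primeFactors := fun r hr => hP (Finset.mem_insert_of_mem hr)
    have hp : p.Prime := Nat.prime_of_mem_primeFactors hpq
    have hgp1 : ∀ a : ℕ, g (p ^ a) = 1 := by
      intro a
      induction a with
      | zero => simpa using hg1
      | succ a iha =>
        rw [pow_succ, hgm, iha, hgq p hp (Nat.dvd_of_mem_primeFactors hpq), one_mul]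
    intro x hx
    have hx0 : (0:ℝ) < x := lt_of_lt_of_le one_pos hx
    set N := ⌊x⌋₊ with hNdef
    have hN : N ≠ 0 := by
      have : 1 ≤ N := Nat.le_floor (by exact_mod_cast hx)
      omega
    set k := P.card with hk
    set L := Real.log x with hL
    set c := Real.log p with hcdef
    set Sp := ∑ r ∈ P, Real.log r with hSp
    set Pi := ∏ r ∈ P, Real.log r with hPi
    have hc : 0 < c := Real.log_pos (by exact_mod_cast hp.one_lt)
    have hPi0 : 0 < Pi :=
      Finset.prod_pos fun r hr => Real.log_pos
        (by exact_mod_cast (Nat.prime_of_mem_primeFactors (hPq hr)).one_lt)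
    have hSp0 : 0 ≤ Sp :=
      Finset.sum_nonneg fun r hr => Real.log_nonneg
        (by exact_mod_cast (Nat.prime_of_mem_primeFactors (hPq hr)).one_le)
    set A := Nat.log p N with hA
    have hpAx : ∀ a ∈ range (A+1), (p:ℝ)^a ≤ x := by
      intro a ha
      have ha' : a ≤ A := by simpa [Nat.lt_succ_iff] using ha
      have h1 : (p:ℕ)^a ≤ p^A := Nat.pow_le_pow_right hp.pos ha'
      have h2 : (p:ℕ)^A ≤ N := Nat.pow_log_le_self p hN
      have h3 : (N:ℝ) ≤ x := Nat.floor_le hx0.le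
      calc (p:ℝ)^a = ((p^a : ℕ) : ℝ) := by push_cast; ring
        _ ≤ ((N:ℕ):ℝ) := by exact_mod_cast le_trans h1 h2
        _ ≤ x := h3
    have ht0 : ∀ a ∈ range (A+1), 0 ≤ L - a*c + Sp := by
      intro a ha
      have : (a:ℝ)*c ≤ L := by
        calc (a:ℝ)*c = Real.log ((p:ℝ)^a) := by rw [Real.log_pow]
          _ ≤ L := Real.log_le_log (pow_pos (by exact_mod_cast hp.pos) a) (hpAx a ha)
      linarith
    have hinner : ∀ a ∈ range (A+1),
        |∑ m ∈ Icc 1 (N / p ^ a), (if ∀ r ∈ q.primeFactors \ P, ¬ r ∣ m then g m else 0)|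
          ≤ S * (L - a * c + Sp) ^ k / (k.factorial * Pi) := by
      intro a ha
      have hpa : (0:ℝ) < (p:ℝ)^a := pow_pos (by exact_mod_cast hp.pos) a
      have h1 : (1:ℝ) ≤ x / (p:ℝ)^a := (one_le_div hpa).2 (hpAx a ha)
      have hIH := IH hPq (x / (p:ℝ)^a) h1
      have hfl : ⌊x / (p:ℝ)^a⌋₊ = N / p^a := by
        rw [show ((p:ℝ)^a) = ((p^a : ℕ) : ℝ) by push_cast; ring]
        exact Nat.floor_div_natCast x (p^a)
      rw [hfl, Real.log_div hx0.ne' hpa.ne', Real.log_pow] at hIH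
      convert hIH using 3
    have hterm : ∀ a ∈ range (A+1), (L - a*c + Sp)^k * ((k+1)*c)
        ≤ (L - a*c + Sp + c)^(k+1) - (L - (a+1:ℕ)*c + Sp + c)^(k+1) := by
      intro a ha
      have h := pow_step (L - a*c + Sp) c (ht0 a ha) hc.le k
      have heq : (L - ((a+1:ℕ):ℝ)*c + Sp + c) = (L - a*c + Sp) := by push_cast; ring
      rw [heq]
      linarith
    have htel : ∑ a ∈ range (A+1), (L - a*c + Sp)^k ≤ (L + Sp + c)^(k+1) / ((k+1)*c) := by
      have h1 := Finset.sum_le_sum hterm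
      rw [← Finset.sum_mul] at h1
      have h2 := Finset.sum_range_sub' (fun a : ℕ => (L - a*c + Sp + c)^(k+1)) (A+1)
      have hlast : 0 ≤ (L - ((A+1:ℕ):ℝ)*c + Sp + c)^(k+1) := by
        have heq : (L - ((A+1:ℕ):ℝ)*c + Sp + c) = (L - A*c + Sp) := by push_cast; ring
        rw [heq]
        exact pow_nonneg (ht0 A (by simp)) _
      have h3 : (∑ a ∈ range (A+1), (L - a*c + Sp)^k) * ((k+1)*c) ≤ (L + Sp + c)^(k+1) := by
        have hf0 : (L - ((0:ℕ):ℝ)*c + Sp + c)^(k+1) = (L + Sp + c)^(k+1) := by push_cast; ring_nf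
        calc (∑ a ∈ range (A+1), (L - a*c + Sp)^k) * ((k+1)*c)
            ≤ ∑ a ∈ range (A+1), ((L - a*c + Sp + c)^(k+1) - (L - (a+1:ℕ)*c + Sp + c)^(k+1)) := h1
          _ = (L - ((0:ℕ):ℝ)*c + Sp + c)^(k+1) - (L - ((A+1:ℕ):ℝ)*c + Sp + c)^(k+1) := h2
          _ ≤ (L + Sp + c)^(k+1) := by rw [hf0]; linarith
      rw [le_div_iff₀ (by positivity)]
      exact h3
    rw [hNdef] at *
    rw [decomp q g hgm P p hp hpq hpP hgp1 ⌊x⌋₊ hN]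
    calc |∑ a ∈ range (A+1), ∑ m ∈ Icc 1 (⌊x⌋₊ / p ^ a),
            (if ∀ r ∈ q.primeFactors \ P, ¬ r ∣ m then g m else 0)|
        ≤ ∑ a ∈ range (A+1), |∑ m ∈ Icc 1 (⌊x⌋₊ / p ^ a),
            (if ∀ r ∈ q.primeFactors \ P, ¬ r ∣ m then g m else 0)| :=
          Finset.abs_sum_le_sum_abs _ _
      _ ≤ ∑ a ∈ range (A+1), S * (L - a * c + Sp) ^ k / (k.factorial * Pi) :=
          Finset.sum_le_sum hinner
      _ = S / (k.factorial * Pi) * ∑ a ∈ range (A+1), (L - a * c + Sp) ^ k := by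
          rw [Finset.mul_sum]
          exact Finset.sum_congr rfl fun a _ => by ring
      _ ≤ S / (k.factorial * Pi) * ((L + Sp + c)^(k+1) / ((k+1)*c)) := by
          apply mul_le_mul_of_nonneg_left htel
          positivity
      _ = S * (L + ∑ r ∈ insert p P, Real.log r) ^ (insert p P).card /
          ((insert p P).card.factorial * ∏ r ∈ insert p P, Real.log r) := by
          rw [Finset.card_insert_of_notMem hpP, Finset.sum_insert hpP,
            Finset.prod_insert hpP, Nat.factorial_succ, ← hk, ← hcdef, ← hSp, ← hPi]
          have hk0 : (0:ℝ) < k.factorial := by exact_mod_cast k.factorial_pos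
          field_simp
          push_cast
          ring

theorem stmt15 (q : ℕ) (hq : 1 < q) (χ : DirichletCharacter ℝ q) (hχ : χ ≠ 1)
    (g : ℕ → ℝ)
    (hg1 : g 1 = 1) (hgm : ∀ m n : ℕ, g (m * n) = g m * g n)
    (hgpm : ∀ n : ℕ, 0 < n → g n = 1 ∨ g n = -1)
    (hgq : ∀ p : ℕ, p.Prime → p ∣ q → g p = 1)
    (hgχ : ∀ n : ℕ, Nat.Coprime n q → g n = χ (n : ZMod q))
    (B : ℝ) (hB : ∀ y : ℝ, |∑ n ∈ Icc 1 ⌊y⌋₊, χ (n : ZMod q)| ≤ B) :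
    (∀ α > (0:ℝ),
      (fun x : ℝ => ∑ n ∈ Icc 1 ⌊x⌋₊, g n) =O[atTop] fun x : ℝ => x ^ α) ∧
    Filter.limsup
        (fun x : ℝ => |∑ n ∈ Icc 1 ⌊x⌋₊, g n| / (Real.log x) ^ q.primeFactors.card) atTop
      ≤ (⨆ y : ℝ, |∑ n ∈ Icc 1 ⌊y⌋₊, χ (n : ZMod q)|) /
          (Nat.factorial q.primeFactors.card) *
        ∏ p ∈ q.primeFactors, 1 / Real.log p := by
  classical
  set S : ℝ := ⨆ y : ℝ, |∑ m ∈ Icc 1 ⌊y⌋₊, χ (m : ZMod q)| with hSdef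
  set ω : ℕ := q.primeFactors.card with hω
  set Sq : ℝ := ∑ p ∈ q.primeFactors, Real.log p with hSq
  set Pq : ℝ := ∏ p ∈ q.primeFactors, Real.log p with hPq
  have hω0 : ω ≠ 0 := by
    have : q.primeFactors.Nonempty := (Nat.nonempty_primeFactors).2 hq
    simp [hω, Finset.card_pos.2 this, (Finset.card_pos.2 this).ne']
  have hprime : ∀ r ∈ q.primeFactors, (1:ℝ) < r := fun r hr => by
    exact_mod_cast (Nat.prime_of_mem_primeFactors hr).one_lt
  have hPq0 : 0 < Pq := Finset.prod_pos fun r hr => Real.log_pos (hprime r hr)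
  have hSq0 : 0 ≤ Sq := Finset.sum_nonneg fun r hr => Real.log_nonneg (le_of_lt (hprime r hr))
  have hbdd : BddAbove (Set.range fun y : ℝ => |∑ m ∈ Icc 1 ⌊y⌋₊, χ (m : ZMod q)|) := by
    refine ⟨B, ?_⟩; rintro z ⟨y, rfl⟩; exact hB y
  have hS0 : 0 ≤ S :=
    le_trans (abs_nonneg (∑ m ∈ Icc 1 ⌊(0:ℝ)⌋₊, χ (m : ZMod q))) (le_ciSup hbdd 0)
  have hfac0 : (0:ℝ) < (ω.factorial : ℝ) := by exact_mod_cast ω.factorial_pos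
  -- main bound
  have hMg : ∀ x : ℝ, 1 ≤ x →
      |∑ n ∈ Icc 1 ⌊x⌋₊, g n| ≤ S * (Real.log x + Sq) ^ ω / (ω.factorial * Pq) := by
    intro x hx
    have h := key q hq χ g hg1 hgm hgq hgχ B hB q.primeFactors Finset.Subset.rfl x hx
    simpa using h
  constructor
  · intro α hα
    have hαω : 0 < α / ω := by
      apply div_pos hα
      exact_mod_cast Nat.pos_of_ne_zero hω0
    -- Step A
    have hA : (fun x : ℝ => ∑ n ∈ Icc 1 ⌊x⌋₊, g n) =O[atTop]
        fun x : ℝ => (Real.log x + Sq) ^ ω := by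
      rw [isBigO_iff]
      refine ⟨S / (ω.factorial * Pq), ?_⟩
      filter_upwards [eventually_ge_atTop (1:ℝ)] with x hx
      have hlog0 : 0 ≤ Real.log x := Real.log_nonneg hx
      have hb0 : 0 ≤ (Real.log x + Sq) ^ ω := by positivity
      rw [Real.norm_eq_abs, Real.norm_eq_abs, abs_of_nonneg hb0]
      calc |∑ n ∈ Icc 1 ⌊x⌋₊, g n| ≤ S * (Real.log x + Sq) ^ ω / (ω.factorial * Pq) := hMg x hx
        _ = S / (ω.factorial * Pq) * (Real.log x + Sq) ^ ω := by ring
    -- Step B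
    have h1 : (fun x : ℝ => Real.log x + Sq) =o[atTop] fun x : ℝ => x ^ (α / ω) := by
      refine IsLittleO.add (isLittleO_log_rpow_atTop hαω) ?_
      rw [isLittleO_const_left]
      right
      refine tendsto_atTop_mono' atTop ?_ (tendsto_rpow_atTop hαω)
      filter_upwards [eventually_ge_atTop (0:ℝ)] with x hx
      exact le_abs_self _
    have h2 : (fun x : ℝ => (Real.log x + Sq) ^ ω) =o[atTop]
        fun x : ℝ => (x ^ (α / ω)) ^ ω := h1.pow (Nat.pos_of_ne_zero hω0)
    have h3 : (fun x : ℝ => (x ^ (α / ω)) ^ ω) =ᶠ[atTop] fun x : ℝ => x ^ α := by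
      filter_upwards [eventually_gt_atTop (0:ℝ)] with x hx
      rw [← Real.rpow_natCast (x ^ (α / ω)) ω, ← Real.rpow_mul hx.le,
        div_mul_cancel₀ α (by exact_mod_cast hω0 : (ω:ℝ) ≠ 0)]
    exact hA.trans (h2.isBigO.trans h3.isBigO)
  · -- limsup part
    set C : ℝ := S / (ω.factorial : ℝ) * ∏ p ∈ q.primeFactors, 1 / Real.log p with hC
    have hCP : (∏ p ∈ q.primeFactors, 1 / Real.log p) = 1 / Pq := by
      rw [hPq, one_div, ← Finset.prod_inv_distrib]
      simp [one_div]
    have hratio : Tendsto (fun x : ℝ => (Real.log x + Sq) / Real.log x) atTop (nhds 1) := by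
      have h1 : Tendsto (fun x : ℝ => 1 + Sq / Real.log x) atTop (nhds 1) := by
        have := Tendsto.div_atTop (tendsto_const_nhds (x := Sq)) Real.tendsto_log_atTop
        simpa using (tendsto_const_nhds (x := (1:ℝ))).add this
      refine h1.congr' ?_
      filter_upwards [eventually_gt_atTop (1:ℝ)] with x hx
      have hlx : Real.log x ≠ 0 := (Real.log_pos hx).ne'
      field_simp
    have hF : Tendsto (fun x : ℝ => S / (ω.factorial : ℝ) * (1 / Pq) *
        ((Real.log x + Sq) / Real.log x) ^ ω) atTop (nhds C) := by
      have := (hratio.pow ω).const_mul (S / (ω.factorial : ℝ) * (1 / Pq))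
      simpa [hC, hCP, mul_assoc] using this
    have h_ev : ∀ᶠ x : ℝ in atTop,
        |∑ n ∈ Icc 1 ⌊x⌋₊, g n| / (Real.log x) ^ ω
          ≤ S / (ω.factorial : ℝ) * (1 / Pq) * ((Real.log x + Sq) / Real.log x) ^ ω := by
      filter_upwards [eventually_gt_atTop (1:ℝ)] with x hx
      have hlx : 0 < Real.log x := Real.log_pos hx
      have hb := hMg x hx.le
      calc |∑ n ∈ Icc 1 ⌊x⌋₊, g n| / (Real.log x) ^ ω
          ≤ (S * (Real.log x + Sq) ^ ω / (ω.factorial * Pq)) / (Real.log x) ^ ω := by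
            gcongr
          _ = S / (ω.factorial : ℝ) * (1 / Pq) * ((Real.log x + Sq) / Real.log x) ^ ω := by
            rw [div_pow]
            field_simp
    calc Filter.limsup (fun x : ℝ => |∑ n ∈ Icc 1 ⌊x⌋₊, g n| / (Real.log x) ^ ω) atTop
        ≤ Filter.limsup (fun x : ℝ => S / (ω.factorial : ℝ) * (1 / Pq) *
            ((Real.log x + Sq) / Real.log x) ^ ω) atTop := by
          refine limsup_le_limsup h_ev ?_ ?_
          · refine IsBoundedUnder.isCoboundedUnder_le ⟨0, Filter.eventually_map.2 ?_⟩
            filter_upwards [eventually_gt_atTop (1:ℝ)] with x hx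
            have hlx : 0 < Real.log x := Real.log_pos hx
            positivity
          · exact hF.isBoundedUnder_le
      _ = C := hF.limsup_eq
      _ = S / (ω.factorial : ℝ) * ∏ p ∈ q.primeFactors, 1 / Real.log p := rfl
end
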